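/- Let A, B ∈ SL(2,ℂ) with Trace(ABA^{-1}B^{-1}) = 2. Then the subgroup of SL(2,ℂ) generated by A and B is not a free group of rank two on the generators A and B. -/

import Mathlib

open Matrix

lemma unip (X Y : Matrix.SpecialLinearGroup (Fin 2) ℂ)
    (hX : (X : Matrix (Fin 2) (Fin 2) ℂ) 1 0 = 0)
    (hY : (Y : Matrix (Fin 2) (Fin 2) ℂ) 1 0 = 0) :
    ∃ u : ℂ, ((X * Y * X⁻¹ * Y⁻¹ : Matrix.SpecialLinearGroup (Fin 2) ℂ) :
      Matrix (Fin 2) (Fin 2) ℂ) = !![1, u; 0, 1] := by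
  have hdX : det (X : Matrix (Fin 2) (Fin 2) ℂ) = 1 := X.2
  have hdY : det (Y : Matrix (Fin 2) (Fin 2) ℂ) = 1 := Y.2
  have e1 : ((X * Y * X⁻¹ * Y⁻¹ : Matrix.SpecialLinearGroup (Fin 2) ℂ) :
      Matrix (Fin 2) (Fin 2) ℂ) = (X : Matrix (Fin 2) (Fin 2) ℂ) * Y *
      adjugate (X : Matrix (Fin 2) (Fin 2) ℂ) * adjugate (Y : Matrix (Fin 2) (Fin 2) ℂ) := by
    simp [Matrix.SpecialLinearGroup.coe_inv]
  obtain ⟨a, b, c, d, hXe⟩ : ∃ a b c d, (X : Matrix (Fin 2) (Fin 2) ℂ) = !![a,b;c,d] :=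
    ⟨_, _, _, _, Matrix.eta_fin_two _⟩
  obtain ⟨e, f, g, k, hYe⟩ : ∃ e f g k, (Y : Matrix (Fin 2) (Fin 2) ℂ) = !![e,f;g,k] :=
    ⟨_, _, _, _, Matrix.eta_fin_two _⟩
  rw [hXe] at hX hdX; rw [hYe] at hY hdY
  rw [Matrix.det_fin_two] at hdX hdY
  simp at hX hY
  subst hX hY
  simp at hdX hdY
  rw [e1, hXe, hYe]
  refine ⟨-(a*d*e*f) + a*b*e*k - a*b*e^2 + a^2*e*f, ?_⟩
  rw [Matrix.adjugate_fin_two]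
  ext i j
  fin_cases i <;> fin_cases j <;>
    simp [Matrix.mul_apply, Fin.sum_univ_two] <;>
    first | ring1 | linear_combination (e*k) * hdX + hdY
open Matrix

lemma coe_conj (c M : Matrix.SpecialLinearGroup (Fin 2) ℂ) :
    ((c⁻¹ * M * c : Matrix.SpecialLinearGroup (Fin 2) ℂ) : Matrix (Fin 2) (Fin 2) ℂ) =
      adjugate (c : Matrix (Fin 2) (Fin 2) ℂ) * (M : Matrix (Fin 2) (Fin 2) ℂ) *
        (c : Matrix (Fin 2) (Fin 2) ℂ) := by
  simp [Matrix.SpecialLinearGroup.coe_inv]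

lemma exists_conj (v : Fin 2 → ℂ) (hv : v ≠ 0) :
    ∃ c : Matrix.SpecialLinearGroup (Fin 2) ℂ,
      ∀ (M : Matrix.SpecialLinearGroup (Fin 2) ℂ) (α : ℂ),
      Matrix.mulVec (M : Matrix (Fin 2) (Fin 2) ℂ) v = α • v →
      ((c⁻¹ * M * c : Matrix.SpecialLinearGroup (Fin 2) ℂ) : Matrix (Fin 2) (Fin 2) ℂ) 1 0 = 0 := by
  by_cases hp : v 0 = 0
  · have hq : v 1 ≠ 0 := by
      intro hq; apply hv; funext i; fin_cases i <;> simp [hp, hq]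
    have hdet : det !![0, -(v 1)⁻¹; v 1, 0] = 1 := by
      rw [Matrix.det_fin_two_of]; field_simp; norm_num
    refine ⟨⟨!![0, -(v 1)⁻¹; v 1, 0], hdet⟩, ?_⟩
    intro M α hmv
    have h0 := congrFun hmv 0
    simp only [Matrix.mulVec, dotProduct, Fin.sum_univ_two, Pi.smul_apply,
      smul_eq_mul] at h0
    refine (congrFun (congrFun (coe_conj _ M) 1) 0).trans ?_
    show (adjugate !![0, -(v 1)⁻¹; v 1, 0] * (M : Matrix (Fin 2) (Fin 2) ℂ) *
      !![0, -(v 1)⁻¹; v 1, 0]) 1 0 = 0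
    rw [Matrix.adjugate_fin_two]
    simp only [Matrix.mul_apply, Matrix.vecMul, dotProduct, Fin.sum_univ_two,
      Matrix.cons_val', Matrix.cons_val_zero, Matrix.cons_val_one, Matrix.head_cons,
      Matrix.head_fin_const, Matrix.empty_val', Matrix.cons_val_fin_one, Matrix.of_apply]
    linear_combination (-(v 1)) * h0 + (v 1 * ((M : Matrix (Fin 2) (Fin 2) ℂ) 0 0 - α)) * hp
  · have hdet : det !![v 0, 0; v 1, (v 0)⁻¹] = 1 := by
      rw [Matrix.det_fin_two_of]; field_simp; norm_num
    refine ⟨⟨!![v 0, 0; v 1, (v 0)⁻¹], hdet⟩, ?_⟩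
    intro M α hmv
    have h0 := congrFun hmv 0
    have h1 := congrFun hmv 1
    simp only [Matrix.mulVec, dotProduct, Fin.sum_univ_two, Pi.smul_apply,
      smul_eq_mul] at h0 h1
    refine (congrFun (congrFun (coe_conj _ M) 1) 0).trans ?_
    show (adjugate !![v 0, 0; v 1, (v 0)⁻¹] * (M : Matrix (Fin 2) (Fin 2) ℂ) *
      !![v 0, 0; v 1, (v 0)⁻¹]) 1 0 = 0
    rw [Matrix.adjugate_fin_two]
    simp only [Matrix.mul_apply, Matrix.vecMul, dotProduct, Fin.sum_univ_two,
      Matrix.cons_val', Matrix.cons_val_zero, Matrix.cons_val_one, Matrix.head_cons,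
      Matrix.head_fin_const, Matrix.empty_val', Matrix.cons_val_fin_one, Matrix.of_apply]
    linear_combination (-(v 1)) * h0 + (v 0) * h1
open Matrix

lemma exists_eigvec (M : Matrix (Fin 2) (Fin 2) ℂ) :
    ∃ v : Fin 2 → ℂ, v ≠ 0 ∧ ∃ α : ℂ, M.mulVec v = α • v := by
  obtain ⟨α, hα⟩ := Module.End.exists_eigenvalue (Matrix.mulVecLin M)
  obtain ⟨v, hv⟩ := hα.exists_hasEigenvector
  exact ⟨v, hv.2, α, by
    have := Module.End.mem_eigenspace_iff.mp hv.1
    simpa [Matrix.mulVecLin_apply] using this⟩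

lemma tri_case (A B : Matrix.SpecialLinearGroup (Fin 2) ℂ)
    (hA : (A : Matrix (Fin 2) (Fin 2) ℂ) 1 0 = 0)
    (h : Matrix.trace ((A * B * A⁻¹ * B⁻¹ : Matrix.SpecialLinearGroup (Fin 2) ℂ) :
        Matrix (Fin 2) (Fin 2) ℂ) = 2) :
    ∃ v : Fin 2 → ℂ, v ≠ 0 ∧ ∃ α β : ℂ,
      Matrix.mulVec (A : Matrix (Fin 2) (Fin 2) ℂ) v = α • v ∧
      Matrix.mulVec (B : Matrix (Fin 2) (Fin 2) ℂ) v = β • v := by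
  have hdA : det (A : Matrix (Fin 2) (Fin 2) ℂ) = 1 := A.2
  have hdB : det (B : Matrix (Fin 2) (Fin 2) ℂ) = 1 := B.2
  have e1 : ((A * B * A⁻¹ * B⁻¹ : Matrix.SpecialLinearGroup (Fin 2) ℂ) :
      Matrix (Fin 2) (Fin 2) ℂ) = (A : Matrix (Fin 2) (Fin 2) ℂ) * B *
      adjugate (A : Matrix (Fin 2) (Fin 2) ℂ) * adjugate (B : Matrix (Fin 2) (Fin 2) ℂ) := by
    simp [Matrix.SpecialLinearGroup.coe_inv]
  obtain ⟨a, b, c, d, hAe⟩ : ∃ a b c d, (A : Matrix (Fin 2) (Fin 2) ℂ) = !![a,b;c,d] :=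
    ⟨_, _, _, _, Matrix.eta_fin_two _⟩
  obtain ⟨e, f, g, k, hBe⟩ : ∃ e f g k, (B : Matrix (Fin 2) (Fin 2) ℂ) = !![e,f;g,k] :=
    ⟨_, _, _, _, Matrix.eta_fin_two _⟩
  rw [hAe] at hA hdA; rw [hBe] at hdB
  simp at hA
  subst hA
  rw [Matrix.det_fin_two_of] at hdA hdB
  simp at hdA
  rw [e1, hAe, hBe] at h
  rw [Matrix.adjugate_fin_two, Matrix.adjugate_fin_two] at h
  simp [Matrix.trace_fin_two, Matrix.mul_apply, Fin.sum_univ_two] at h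
  rw [hAe, hBe]
  have key : g * (b^2*g + b*(a-d)*(e-k) - f*(a-d)^2) = 0 := by
    linear_combination h - (2*a*d)*hdB - 2*hdA
  rcases mul_eq_zero.mp key with hg | hQ
  · refine ⟨![1, 0], fun h0 => by simpa using congrFun h0 0, a, e, ?_, ?_⟩ <;>
      · funext i; fin_cases i <;>
          simp [Matrix.mulVec, dotProduct, Fin.sum_univ_two, hg]
  · by_cases hsc : b = 0 ∧ d = a
    · obtain ⟨hb, hda⟩ := hsc
      obtain ⟨w, hw, β, hwB⟩ := exists_eigvec (B : Matrix (Fin 2) (Fin 2) ℂ)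
      refine ⟨w, hw, a, β, ?_, ?_⟩
      · funext i; fin_cases i <;>
          simp [hAe, hb, hda, Matrix.mulVec, dotProduct, Fin.sum_univ_two, mul_comm]
      · rw [← hBe]; exact hwB
    · have hv : (![b, d - a] : Fin 2 → ℂ) ≠ 0 := by
        intro h0
        apply hsc
        constructor
        · simpa using congrFun h0 0
        · have := congrFun h0 1; simp at this
          linear_combination this
      by_cases hb : b = 0
      · have hda : d - a ≠ 0 := by
          intro h0; exact hsc ⟨hb, by linear_combination h0⟩
        have hf : f = 0 := by
          have h2 : f * ((a - d) * (a - d)) = 0 := by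
            linear_combination -hQ + (g*b + (a-d)*(e-k))*hb
          rcases mul_eq_zero.mp h2 with h' | h'
          · exact h'
          · rcases mul_eq_zero.mp h' with h'' | h'' <;>
              · exact absurd (by linear_combination -h'' : d - a = 0) hda
        refine ⟨![b, d - a], hv, d, k, ?_, ?_⟩ <;>
          · funext i; fin_cases i <;>
              simp [Matrix.mulVec, dotProduct, Fin.sum_univ_two, hb, hf] <;> ring
      · refine ⟨![b, d - a], hv, d, (b*e + f*(d-a))/b, ?_, ?_⟩
        · funext i; fin_cases i <;>
            simp [Matrix.mulVec, dotProduct, Fin.sum_univ_two] <;> ring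
        · funext i; fin_cases i <;>
            simp [Matrix.mulVec, dotProduct, Fin.sum_univ_two]
          · field_simp
          · field_simp
            linear_combination hQ

lemma common_eig (A B : Matrix.SpecialLinearGroup (Fin 2) ℂ)
    (h : Matrix.trace ((A * B * A⁻¹ * B⁻¹ : Matrix.SpecialLinearGroup (Fin 2) ℂ) :
        Matrix (Fin 2) (Fin 2) ℂ) = 2) :
    ∃ v : Fin 2 → ℂ, v ≠ 0 ∧ ∃ α β : ℂ,
      Matrix.mulVec (A : Matrix (Fin 2) (Fin 2) ℂ) v = α • v ∧
      Matrix.mulVec (B : Matrix (Fin 2) (Fin 2) ℂ) v = β • v := by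
  obtain ⟨v0, hv0, α0, hA0⟩ := exists_eigvec (A : Matrix (Fin 2) (Fin 2) ℂ)
  obtain ⟨c, hc⟩ := exists_conj v0 hv0
  set A' := c⁻¹ * A * c with hA'def
  set B' := c⁻¹ * B * c with hB'def
  have hA' : (A' : Matrix (Fin 2) (Fin 2) ℂ) 1 0 = 0 := hc A α0 hA0
  have hgrp : A' * B' * A'⁻¹ * B'⁻¹ = c⁻¹ * (A * B * A⁻¹ * B⁻¹) * c := by
    rw [hA'def, hB'def]; group
  have htr' : Matrix.trace ((A' * B' * A'⁻¹ * B'⁻¹ : Matrix.SpecialLinearGroup (Fin 2) ℂ) :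
      Matrix (Fin 2) (Fin 2) ℂ) = 2 := by
    rw [hgrp, coe_conj, Matrix.trace_mul_comm, ← Matrix.mul_assoc, Matrix.mul_adjugate,
      c.2, one_smul, Matrix.one_mul, h]
  obtain ⟨v', hv', α, β, hAv, hBv⟩ := tri_case A' B' hA' htr'
  refine ⟨Matrix.mulVec (c : Matrix (Fin 2) (Fin 2) ℂ) v', ?_, α, β, ?_, ?_⟩
  · intro h0
    apply hv'
    have : Matrix.mulVec (adjugate (c : Matrix (Fin 2) (Fin 2) ℂ))
        (Matrix.mulVec (c : Matrix (Fin 2) (Fin 2) ℂ) v') = 0 := by rw [h0]; simp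
    rwa [Matrix.mulVec_mulVec, Matrix.adjugate_mul, c.2, one_smul, Matrix.one_mulVec] at this
  · have hAc : (A : Matrix (Fin 2) (Fin 2) ℂ) * c = (c : Matrix (Fin 2) (Fin 2) ℂ) * A' := by
      have : A * c = c * A' := by rw [hA'def]; group
      calc (A : Matrix (Fin 2) (Fin 2) ℂ) * c
          = ((A * c : Matrix.SpecialLinearGroup (Fin 2) ℂ) : Matrix (Fin 2) (Fin 2) ℂ) := by simp
        _ = ((c * A' : Matrix.SpecialLinearGroup (Fin 2) ℂ) : Matrix (Fin 2) (Fin 2) ℂ) := by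
              rw [this]
        _ = (c : Matrix (Fin 2) (Fin 2) ℂ) * A' := by simp
    rw [Matrix.mulVec_mulVec, hAc, ← Matrix.mulVec_mulVec, hAv, Matrix.mulVec_smul]
  · have hBc : (B : Matrix (Fin 2) (Fin 2) ℂ) * c = (c : Matrix (Fin 2) (Fin 2) ℂ) * B' := by
      have : B * c = c * B' := by rw [hB'def]; group
      calc (B : Matrix (Fin 2) (Fin 2) ℂ) * c
          = ((B * c : Matrix.SpecialLinearGroup (Fin 2) ℂ) : Matrix (Fin 2) (Fin 2) ℂ) := by simp
        _ = ((c * B' : Matrix.SpecialLinearGroup (Fin 2) ℂ) : Matrix (Fin 2) (Fin 2) ℂ) := by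
              rw [this]
        _ = (c : Matrix (Fin 2) (Fin 2) ℂ) * B' := by simp
    rw [Matrix.mulVec_mulVec, hBc, ← Matrix.mulVec_mulVec, hBv, Matrix.mulVec_smul]

set_option maxHeartbeats 1000000 in
theorem stmt_5 (A B : Matrix.SpecialLinearGroup (Fin 2) ℂ)
    (h : Matrix.trace ((A * B * A⁻¹ * B⁻¹ : Matrix.SpecialLinearGroup (Fin 2) ℂ) :
        Matrix (Fin 2) (Fin 2) ℂ) = 2) :
    ¬ Function.Injective
        (FreeGroup.lift (![A, B]) : FreeGroup (Fin 2) →* Matrix.SpecialLinearGroup (Fin 2) ℂ) := by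
  intro hinj
  obtain ⟨v, hv, α, β, hAv, hBv⟩ := common_eig A B h
  obtain ⟨c, hc⟩ := exists_conj v hv
  set A' := c⁻¹ * A * c with hA'def
  set B' := c⁻¹ * B * c with hB'def
  have hA' : (A' : Matrix (Fin 2) (Fin 2) ℂ) 1 0 = 0 := hc A α hAv
  have hB' : (B' : Matrix (Fin 2) (Fin 2) ℂ) 1 0 = 0 := hc B β hBv
  have hA'inv : ((A'⁻¹ : Matrix.SpecialLinearGroup (Fin 2) ℂ) : Matrix (Fin 2) (Fin 2) ℂ) 1 0 = 0 := by
    rw [Matrix.SpecialLinearGroup.coe_inv, Matrix.adjugate_fin_two]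
    simp [hA']
  obtain ⟨u₁, hu₁⟩ := unip A' B' hA' hB'
  obtain ⟨u₂, hu₂⟩ := unip A'⁻¹ B' hA'inv hB'
  rw [inv_inv] at hu₂
  have hcomm' : (A' * B' * A'⁻¹ * B'⁻¹) * (A'⁻¹ * B' * A' * B'⁻¹)
      = (A'⁻¹ * B' * A' * B'⁻¹) * (A' * B' * A'⁻¹ * B'⁻¹) := by
    apply Subtype.ext
    calc (((A' * B' * A'⁻¹ * B'⁻¹) * (A'⁻¹ * B' * A' * B'⁻¹) :
            Matrix.SpecialLinearGroup (Fin 2) ℂ) : Matrix (Fin 2) (Fin 2) ℂ)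
        = (!![1, u₁; 0, 1] : Matrix (Fin 2) (Fin 2) ℂ) * !![1, u₂; 0, 1] := by
          rw [Matrix.SpecialLinearGroup.coe_mul, hu₁, hu₂]
      _ = (!![1, u₂; 0, 1] : Matrix (Fin 2) (Fin 2) ℂ) * !![1, u₁; 0, 1] := by
          ext i j
          fin_cases i <;> fin_cases j <;>
            simp [Matrix.mul_apply, Fin.sum_univ_two] <;> ring
      _ = (((A'⁻¹ * B' * A' * B'⁻¹) * (A' * B' * A'⁻¹ * B'⁻¹) :
            Matrix.SpecialLinearGroup (Fin 2) ℂ) : Matrix (Fin 2) (Fin 2) ℂ) := by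
          rw [Matrix.SpecialLinearGroup.coe_mul, hu₁, hu₂]
  have hcomm : (A * B * A⁻¹ * B⁻¹) * (A⁻¹ * B * A * B⁻¹)
      = (A⁻¹ * B * A * B⁻¹) * (A * B * A⁻¹ * B⁻¹) := by
    have e₁ : A' * B' * A'⁻¹ * B'⁻¹ = c⁻¹ * (A * B * A⁻¹ * B⁻¹) * c := by
      rw [hA'def, hB'def]; group
    have e₂ : A'⁻¹ * B' * A' * B'⁻¹ = c⁻¹ * (A⁻¹ * B * A * B⁻¹) * c := by
      rw [hA'def, hB'def]; group
    rw [e₁, e₂] at hcomm'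
    have := congrArg (fun x => c * x * c⁻¹) hcomm'
    simpa [mul_assoc] using this
  set x := FreeGroup.of (0 : Fin 2) with hx
  set y := FreeGroup.of (1 : Fin 2) with hy
  have hne : (x*y*x⁻¹*y⁻¹) * (x⁻¹*y*x*y⁻¹) ≠ (x⁻¹*y*x*y⁻¹) * (x*y*x⁻¹*y⁻¹) := by
    rw [hx, hy]; decide
  apply hne
  apply hinj
  have hlx : (FreeGroup.lift (![A, B]) : FreeGroup (Fin 2) →*
      Matrix.SpecialLinearGroup (Fin 2) ℂ) x = A := by simp [hx]
  have hly : (FreeGroup.lift (![A, B]) : FreeGroup (Fin 2) →*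
      Matrix.SpecialLinearGroup (Fin 2) ℂ) y = B := by simp [hy]
  simp only [_root_.map_mul, _root_.map_inv, hlx, hly]
  exact hcomm
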